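/- Let ν : G → H be a surjective group homomorphism, let s : H → G be a weak splitting of ν, and let W be the subgroup of G consisting of all products s(f₁)^{ε₁}⋯s(f_k)^{ε_k} with f₁^{ε₁}⋯f_k^{ε_k} = 1 in H. Then for every g ∈ W and every f ∈ H one has s(f)⁻¹ · g · s(f) ∈ W; consequently the image of s is contained in the normaliser of W in G. -/

import Mathlib

/-- A weak splitting of a surjective group homomorphism `ν : G → H`. -/
def IsWeakSplitting {G H : Type*} [Group G] [Group H] (ν : G →* H) (s : H → G) : Prop :=
  (∀ h, ν (s h) = h) ∧
  ∃ G₀ : Subgroup G,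
    (∀ a ∈ G₀, ∀ b ∈ G₀, a * b = b * a) ∧
    ∀ l : List (H × ℤ), (∀ p ∈ l, p.2 = 1 ∨ p.2 = -1) →
      (l.map fun p => p.1 ^ p.2).prod = 1 →
      (l.map fun p => s p.1 ^ p.2).prod ∈ G₀

/-- The set of products `s(f₁)^ε₁ ⋯ s(f_k)^ε_k` where `f₁^ε₁ ⋯ f_k^ε_k = 1` in `H`. -/
def wordSet {G H : Type*} [Group G] [Group H] (s : H → G) : Set G :=
  {g | ∃ l : List (H × ℤ), (∀ p ∈ l, p.2 = 1 ∨ p.2 = -1) ∧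
    (l.map fun p => p.1 ^ p.2).prod = 1 ∧ g = (l.map fun p => s p.1 ^ p.2).prod}

/-- Let `s` be a weak splitting of `ν` and `W` the subgroup of `G` whose underlying set is
the set of products `s(f₁)^ε₁ ⋯ s(f_k)^ε_k` with `f₁^ε₁ ⋯ f_k^ε_k = 1`.  Then `W` is
closed under conjugation by each `s(f)`, and hence the image of `s` is contained in the
normaliser of `W` in `G`. -/
theorem image_le_normalizer_wordSet {G H : Type*} [Group G] [Group H]
    (ν : G →* H) (hν : Function.Surjective ν)
    (s : H → G) (hs : IsWeakSplitting ν s)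
    (W : Subgroup G) (hW : (W : Set G) = wordSet s) :
    (∀ g ∈ W, ∀ f : H, (s f)⁻¹ * g * s f ∈ W) ∧
      (∀ f : H, s f ∈ Subgroup.normalizer (W : Set G)) := by
  have key : ∀ g ∈ wordSet s, ∀ f : H, ∀ ε : ℤ, (ε = 1 ∨ ε = -1) →
      s f ^ (-ε) * g * s f ^ ε ∈ wordSet s := by
    rintro g ⟨l, hl1, hl2, rfl⟩ f ε hε
    refine ⟨(f, -ε) :: l ++ [(f, ε)], ?_, ?_, ?_⟩
    · intro p hp
      rcases List.mem_cons.mp hp with rfl | hp'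
      · rcases hε with rfl | rfl
        · right; rfl
        · left; rfl
      · rcases List.mem_append.mp hp' with h | h
        · exact hl1 p h
        · rw [List.mem_singleton] at h
          subst h
          exact hε
    · simp [List.map_append, List.prod_append, hl2, zpow_neg]
    · simp [List.map_append, List.prod_append, zpow_neg, mul_assoc]
  have hmem : ∀ g : G, g ∈ W ↔ g ∈ wordSet s := by
    intro g
    rw [← SetLike.mem_coe, hW]
  have part1 : ∀ g ∈ W, ∀ f : H, (s f)⁻¹ * g * s f ∈ W := by
    intro g hg f
    rw [hmem]
    have := key g ((hmem g).mp hg) f 1 (Or.inl rfl)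
    simpa using this
  refine ⟨part1, fun f => ?_⟩
  rw [Subgroup.mem_normalizer_iff]
  intro n
  constructor
  · intro hn
    rw [hmem]
    have := key n ((hmem n).mp hn) f (-1) (Or.inr rfl)
    simpa using this
  · intro hn
    have := part1 _ hn f
    have h2 : (s f)⁻¹ * (s f * n * (s f)⁻¹) * s f = n := by group
    rwa [h2] at this
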